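/- (Theorem on small holdings) Let α > 0, β > 0, y ≥ 0, z ≥ 2y, and φ ∈ [0, (z-2y)/α]. For deterministic measurable ζ : [0,t] → [0,∞) with ∫₀ᵗ ζ_v dv ≤ φ, define f̃(ζ) = ∫₀ᵗ ζ_r · exp(e^{-βr}z - e^{-2βr}y - α e^{-βr}∫₀ʳ e^{βv}ζ_v dv) dr. Then sup over all such ζ of f̃(ζ) equals (1 - e^{-αφ})·e^{z-y}/α. -/

import Mathlib

set_option maxHeartbeats 1600000

open Real MeasureTheory intervalIntegral

lemma expNegLe (x : ℝ) (hx : 0 ≤ x) : Real.exp (-x) ≤ 1 - x + x ^ 2 := by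
  have h1 : x + 1 ≤ Real.exp x := Real.add_one_le_exp x
  have h3 : 0 ≤ 1 - x + x ^ 2 := by nlinarith [sq_nonneg (x - 1)]
  have h2 : Real.exp (-x) = 1 / Real.exp x := by rw [Real.exp_neg]; ring
  rw [h2, div_le_iff₀ (Real.exp_pos x)]
  nlinarith [mul_le_mul_of_nonneg_left h1 h3, pow_nonneg hx 3]

lemma IIbdd {f : ℝ → ℝ} (hf : Measurable f) {M : ℝ} (hM : ∀ v, |f v| ≤ M) (a b : ℝ) :
    IntervalIntegrable f volume a b := by
  rw [intervalIntegrable_iff]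
  refine (integrableOn_const ?_).mono' hf.aestronglyMeasurable.restrict
    (Filter.Eventually.of_forall fun v => hM v)
  rw [Set.uIoc]
  exact measure_Ioc_lt_top.ne

lemma key_b {ζ : ℝ → ℝ} (hm : Measurable ζ) (h0 : ∀ v, 0 ≤ ζ v) {M : ℝ} (hM : ∀ v, ζ v ≤ M)
    {α t : ℝ} (hα : 0 < α) (ht : 0 ≤ t) :
    ∫ r in (0:ℝ)..t, ζ r * Real.exp (-(α * ∫ v in (0:ℝ)..r, ζ v))
      ≤ (1 - Real.exp (-(α * ∫ v in (0:ℝ)..t, ζ v))) / α := by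
  have hM0 : 0 ≤ M := le_trans (h0 0) (hM 0)
  have habs : ∀ v, |ζ v| ≤ M := fun v => by rw [abs_of_nonneg (h0 v)]; exact hM v
  have hII : ∀ a b : ℝ, IntervalIntegrable ζ volume a b := IIbdd hm habs
  set ψ : ℝ → ℝ := fun r => ∫ v in (0:ℝ)..r, ζ v with hψdef
  have hψc : Continuous ψ := intervalIntegral.continuous_primitive hII 0
  have hsplit : ∀ a b : ℝ, ψ b - ψ a = ∫ v in a..b, ζ v := by
    intro a b
    have := integral_add_adjacent_intervals (hII 0 a) (hII a b)
    simp only [hψdef]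
    linarith [this]
  have hψmono : Monotone ψ := by
    intro a b hab
    have h1 : ψ b - ψ a = ∫ v in a..b, ζ v := hsplit a b
    have h2 : 0 ≤ ∫ v in a..b, ζ v :=
      intervalIntegral.integral_nonneg hab (fun v _ => h0 v)
    linarith
  have hψ0 : ψ 0 = 0 := intervalIntegral.integral_same
  have hD : ∀ a b : ℝ, a ≤ b → ψ b - ψ a ≤ M * (b - a) := by
    intro a b hab
    rw [hsplit a b]
    calc ∫ v in a..b, ζ v ≤ ∫ v in a..b, M :=
          intervalIntegral.integral_mono_on hab (hII a b)
            (intervalIntegrable_const) (fun v _ => hM v)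
      _ = M * (b - a) := by simp [mul_comm]
  set q : ℝ → ℝ := fun r => ζ r * Real.exp (-(α * ψ r)) with hqdef
  have hqII : ∀ a b : ℝ, IntervalIntegrable q volume a b := by
    intro a b
    exact (hII a b).mul_continuousOn
      (((continuous_const.mul hψc).neg.rexp).continuousOn)
  have piece : ∀ a b : ℝ, 0 ≤ a → a ≤ b →
      ∫ r in a..b, q r ≤
        (Real.exp (-(α * ψ a)) - Real.exp (-(α * ψ b))) / α + α * (ψ b - ψ a) ^ 2 := by
    intro a b ha0 hab
    have hD0 : 0 ≤ ψ b - ψ a := sub_nonneg.2 (hψmono hab)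
    have step1 : ∫ r in a..b, q r ≤ (ψ b - ψ a) * Real.exp (-(α * ψ a)) := by
      have h := intervalIntegral.integral_mono_on hab (hqII a b)
          ((hII a b).mul_const (Real.exp (-(α * ψ a)))) (fun r hr => by
        have h1 : ψ a ≤ ψ r := hψmono hr.1
        have h2 : Real.exp (-(α * ψ r)) ≤ Real.exp (-(α * ψ a)) := by
          apply Real.exp_le_exp.2; nlinarith
        exact mul_le_mul_of_nonneg_left h2 (h0 r))
      rw [intervalIntegral.integral_mul_const, ← hsplit a b] at h
      exact h
    have hx : 0 ≤ α * (ψ b - ψ a) := by positivity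
    have hexp1 : Real.exp (-(α * (ψ b - ψ a))) ≤
        1 - α * (ψ b - ψ a) + (α * (ψ b - ψ a)) ^ 2 := expNegLe _ hx
    have hexp2 : Real.exp (-(α * ψ b)) =
        Real.exp (-(α * ψ a)) * Real.exp (-(α * (ψ b - ψ a))) := by
      rw [← Real.exp_add]; ring_nf
    have hψa0 : 0 ≤ ψ a := by rw [← hψ0]; exact hψmono ha0
    have hea : Real.exp (-(α * ψ a)) ≤ 1 := by
      apply Real.exp_le_one_iff.2; nlinarith
    have hea0 : 0 < Real.exp (-(α * ψ a)) := Real.exp_pos _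
    have key : (ψ b - ψ a) * Real.exp (-(α * ψ a)) ≤
        (Real.exp (-(α * ψ a)) - Real.exp (-(α * ψ b))) / α + α * (ψ b - ψ a) ^ 2 := by
      rw [hexp2]
      have heq : (Real.exp (-(α * ψ a)) - Real.exp (-(α * ψ a)) *
            Real.exp (-(α * (ψ b - ψ a)))) / α + α * (ψ b - ψ a) ^ 2
          = (Real.exp (-(α * ψ a)) - Real.exp (-(α * ψ a)) *
            Real.exp (-(α * (ψ b - ψ a))) + α ^ 2 * (ψ b - ψ a) ^ 2) / α := by
        field_simp
      rw [heq, le_div_iff₀ hα]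
      nlinarith [mul_le_mul_of_nonneg_left hexp1 hea0.le]
    linarith
  have main : ∀ n : ℕ, 0 < n →
      (∫ r in (0:ℝ)..t, q r) ≤ (1 - Real.exp (-(α * ψ t))) / α + α * M ^ 2 * t ^ 2 / n := by
    intro n hn
    have hnn : (0:ℝ) < n := Nat.cast_pos.2 hn
    set a : ℕ → ℝ := fun i => i * (t / n) with hadef
    have htn : 0 ≤ t / n := by positivity
    have hamono : ∀ i : ℕ, a i ≤ a (i + 1) := by
      intro i
      simp only [hadef]
      push_cast
      nlinarith
    have ha0 : ∀ i : ℕ, 0 ≤ a i := by intro i; simp only [hadef]; positivity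
    have hsum := intervalIntegral.sum_integral_adjacent_intervals
      (a := a) (μ := volume) (n := n) (fun i _ => hqII _ _)
    have ha0' : a 0 = (0:ℝ) := by simp [hadef]
    have han : a n = t := by simp only [hadef]; field_simp
    have hstep : ∀ i : ℕ, a (i + 1) - a i = t / n := by
      intro i; simp only [hadef]; push_cast; ring
    have hpieceB : ∀ i ∈ Finset.range n, (∫ r in a i..a (i + 1), q r) ≤
        (Real.exp (-(α * ψ (a i))) / α - Real.exp (-(α * ψ (a (i + 1)))) / α)
          + α * (M * (t / n)) ^ 2 := by
      intro i _
      refine le_trans (piece (a i) (a (i + 1)) (ha0 i) (hamono i)) ?_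
      have hd0 : 0 ≤ ψ (a (i + 1)) - ψ (a i) := sub_nonneg.2 (hψmono (hamono i))
      have hd1 : ψ (a (i + 1)) - ψ (a i) ≤ M * (t / n) := by
        have h := hD (a i) (a (i + 1)) (hamono i)
        rw [hstep i] at h
        exact h
      have h2 : α * (ψ (a (i + 1)) - ψ (a i)) ^ 2 ≤ α * (M * (t / n)) ^ 2 := by
        apply mul_le_mul_of_nonneg_left _ hα.le
        nlinarith
      have h3 : (Real.exp (-(α * ψ (a i))) - Real.exp (-(α * ψ (a (i + 1))))) / α
          = Real.exp (-(α * ψ (a i))) / α - Real.exp (-(α * ψ (a (i + 1)))) / α :=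
        sub_div _ _ _
      linarith
    have hsum2 := Finset.sum_le_sum hpieceB
    rw [hsum, ha0', han] at hsum2
    rw [Finset.sum_add_distrib, Finset.sum_range_sub' (f := fun i => Real.exp (-(α * ψ (a i))) / α),
      Finset.sum_const, Finset.card_range] at hsum2
    rw [ha0', han, hψ0] at hsum2
    have hval : Real.exp (-(α * 0)) / α - Real.exp (-(α * ψ t)) / α
        = (1 - Real.exp (-(α * ψ t))) / α := by
      rw [mul_zero, neg_zero, Real.exp_zero]; ring
    rw [hval] at hsum2
    have hlast : n • (α * (M * (t / (n:ℝ))) ^ 2) = α * M ^ 2 * t ^ 2 / n := by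
      rw [nsmul_eq_mul]; field_simp
    rw [hlast] at hsum2
    exact hsum2
  refine le_of_forall_pos_le_add fun ε hε => ?_
  obtain ⟨n, hn⟩ := exists_nat_gt (α * M ^ 2 * t ^ 2 / ε)
  have hC0 : (0:ℝ) ≤ α * M ^ 2 * t ^ 2 / ε := by positivity
  have hn0 : 0 < n := by exact_mod_cast hC0.trans_lt hn
  have hnn : (0:ℝ) < n := Nat.cast_pos.2 hn0
  have h1 := main n hn0
  have h2 : α * M ^ 2 * t ^ 2 / n ≤ ε := by
    rw [div_le_iff₀ hnn]
    have := (div_lt_iff₀ hε).1 hn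
    nlinarith
  linarith

theorem small_holdings_value (α β y z t φ : ℝ) (hα : 0 < α) (hβ : 0 < β) (hy : 0 ≤ y)
    (hz : 2 * y ≤ z) (ht : t ∈ Set.Ioc (0 : ℝ) 1)
    (hφ : φ ∈ Set.Icc 0 ((z - 2 * y) / α)) :
    IsLUB
      { x : ℝ | ∃ ζ : ℝ → ℝ, Measurable ζ ∧ (∀ v, 0 ≤ ζ v) ∧
          (∃ M : ℝ, ∀ v, ζ v ≤ M) ∧
          (∫ v in (0 : ℝ)..t, ζ v) ≤ φ ∧
          x = ∫ r in (0 : ℝ)..t,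
            ζ r * Real.exp (Real.exp (-β * r) * z - Real.exp (-2 * β * r) * y
              - α * Real.exp (-β * r) * ∫ v in (0 : ℝ)..r, Real.exp (β * v) * ζ v) }
      ((1 - Real.exp (-α * φ)) * Real.exp (z - y) / α) := by
  constructor
  · rintro x hx
    obtain ⟨ζ, hm, h0, ⟨M, hM⟩, hint, hxeq⟩ := hx
    have ht0 : 0 < t := ht.1
    have hz0 : 0 ≤ z := by linarith
    have habs : ∀ v, |ζ v| ≤ M := fun v => by rw [abs_of_nonneg (h0 v)]; exact hM v
    have hII : ∀ a b : ℝ, IntervalIntegrable ζ volume a b := IIbdd hm habs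
    set ψ : ℝ → ℝ := fun r => ∫ v in (0:ℝ)..r, ζ v with hψdef
    have hψc : Continuous ψ := intervalIntegral.continuous_primitive hII 0
    have hψmono : Monotone ψ := by
      intro a b hab
      have h1 := integral_add_adjacent_intervals (hII 0 a) (hII a b)
      have h2 : 0 ≤ ∫ v in a..b, ζ v :=
        intervalIntegral.integral_nonneg hab (fun v _ => h0 v)
      simp only [hψdef]
      linarith [h1]
    have hψnn : ∀ r, 0 ≤ r → 0 ≤ ψ r := by
      intro r hr
      exact intervalIntegral.integral_nonneg hr (fun v _ => h0 v)
    have hIνII : ∀ a b : ℝ, IntervalIntegrable (fun v => Real.exp (β * v) * ζ v) volume a b :=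
      fun a b => (hII a b).continuousOn_mul
        ((Real.continuous_exp.comp (continuous_const.mul continuous_id)).continuousOn)
    set Iν : ℝ → ℝ := fun r => ∫ v in (0:ℝ)..r, Real.exp (β * v) * ζ v with hIνdef
    have hIνc : Continuous Iν := intervalIntegral.continuous_primitive hIνII 0
    set E : ℝ → ℝ := fun r => Real.exp (-β * r) * z - Real.exp (-2 * β * r) * y
        - α * Real.exp (-β * r) * Iν r with hEdef
    have hEc : Continuous E := by fun_prop
    have hE1II : ∀ a b : ℝ, IntervalIntegrable (fun r => ζ r * Real.exp (E r)) volume a b :=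
      fun a b => (hII a b).mul_continuousOn (hEc.rexp.continuousOn)
    have hE2II : ∀ a b : ℝ, IntervalIntegrable
        (fun r => ζ r * Real.exp (z - y - α * ψ r)) volume a b :=
      fun a b => (hII a b).mul_continuousOn
        (((continuous_const.sub (continuous_const.mul hψc)).rexp).continuousOn)
    have hψφ : ∀ r ∈ Set.Icc (0:ℝ) t, α * ψ r ≤ z - 2 * y := by
      intro r hr
      have h1 : ψ r ≤ ψ t := hψmono hr.2
      have h2 : ψ t ≤ φ := hint
      have h3 : φ ≤ (z - 2 * y) / α := hφ.2
      have := (le_div_iff₀ hα).1 (le_trans (le_trans h1 h2) h3)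
      linarith
    have hEbound : ∀ r ∈ Set.Icc (0:ℝ) t, E r ≤ z - y - α * ψ r := by
      intro r hr
      have hu1 : Real.exp (-β * r) ≤ 1 := by
        apply Real.exp_le_one_iff.2; nlinarith [hr.1]
      have hu0 : 0 < Real.exp (-β * r) := Real.exp_pos _
      have hu2 : Real.exp (-2 * β * r) = Real.exp (-β * r) * Real.exp (-β * r) := by
        rw [← Real.exp_add]; ring_nf
      have hIψ : ψ r ≤ Iν r := by
        refine intervalIntegral.integral_mono_on hr.1 (hII 0 r) (hIνII 0 r) (fun v hv => ?_)
        have h1 : (1:ℝ) ≤ Real.exp (β * v) := by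
          rw [Real.one_le_exp_iff]  -- check
          nlinarith [hv.1]
        nlinarith [h0 v]
      have hψr0 : 0 ≤ ψ r := hψnn r hr.1
      have hαψ := hψφ r hr
      simp only [hEdef, hu2]
      nlinarith [mul_le_mul_of_nonneg_left hIψ (mul_pos hα hu0).le,
        mul_le_mul_of_nonneg_left hαψ (sub_nonneg.2 hu1),
        mul_nonneg hy (sq_nonneg (1 - Real.exp (-β * r))),
        mul_nonneg (mul_nonneg hα.le hψr0) (sub_nonneg.2 hu1)]
    have step1 : x ≤ ∫ r in (0:ℝ)..t, ζ r * Real.exp (z - y - α * ψ r) := by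
      rw [hxeq]
      refine intervalIntegral.integral_mono_on ht0.le (hE1II 0 t) (hE2II 0 t) (fun r hr => ?_)
      exact mul_le_mul_of_nonneg_left (Real.exp_le_exp.2 (hEbound r hr)) (h0 r)
    have step2 : (∫ r in (0:ℝ)..t, ζ r * Real.exp (z - y - α * ψ r))
        = Real.exp (z - y) * ∫ r in (0:ℝ)..t, ζ r * Real.exp (-(α * ψ r)) := by
      rw [← intervalIntegral.integral_const_mul]
      refine intervalIntegral.integral_congr (fun r _ => ?_)
      rw [show z - y - α * ψ r = (z - y) + (-(α * ψ r)) by ring, Real.exp_add]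
      ring
    have step3 : (∫ r in (0:ℝ)..t, ζ r * Real.exp (-(α * ψ r)))
        ≤ (1 - Real.exp (-(α * ψ t))) / α := key_b hm h0 hM hα ht0.le
    have step4 : (1 - Real.exp (-(α * ψ t))) / α ≤ (1 - Real.exp (-α * φ)) / α := by
      have hψt : ψ t ≤ φ := hint
      have h1 : Real.exp (-α * φ) ≤ Real.exp (-(α * ψ t)) := by
        apply Real.exp_le_exp.2; nlinarith
      gcongr
    have hexpnn : (0:ℝ) ≤ Real.exp (z - y) := (Real.exp_pos _).le
    calc x ≤ Real.exp (z - y) * ∫ r in (0:ℝ)..t, ζ r * Real.exp (-(α * ψ r)) := by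
          rw [← step2]; exact step1
      _ ≤ Real.exp (z - y) * ((1 - Real.exp (-(α * ψ t))) / α) :=
          mul_le_mul_of_nonneg_left step3 hexpnn
      _ ≤ Real.exp (z - y) * ((1 - Real.exp (-α * φ)) / α) :=
          mul_le_mul_of_nonneg_left step4 hexpnn
      _ = (1 - Real.exp (-α * φ)) * Real.exp (z - y) / α := by ring
  · intro b hb
    have ht0 : 0 < t := ht.1
    have hz0 : 0 ≤ z := by linarith
    rcases eq_or_lt_of_le hφ.1 with hφ0 | hφpos
    · have h0mem : (0:ℝ) ∈ { x : ℝ | ∃ ζ : ℝ → ℝ, Measurable ζ ∧ (∀ v, 0 ≤ ζ v) ∧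
            (∃ M : ℝ, ∀ v, ζ v ≤ M) ∧
            (∫ v in (0 : ℝ)..t, ζ v) ≤ φ ∧
            x = ∫ r in (0 : ℝ)..t,
              ζ r * Real.exp (Real.exp (-β * r) * z - Real.exp (-2 * β * r) * y
                - α * Real.exp (-β * r) * ∫ v in (0 : ℝ)..r, Real.exp (β * v) * ζ v) } := by
        refine ⟨fun _ => 0, measurable_const, fun v => le_refl 0, ⟨0, fun v => le_refl 0⟩, ?_, ?_⟩
        · simp [hφ.1]
        · simp
      have hzero : (1 - Real.exp (-α * φ)) * Real.exp (z - y) / α = 0 := by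
        rw [← hφ0]; simp
      rw [hzero]
      exact hb h0mem
    · have hkey : ∀ δ ∈ Set.Ioc (0:ℝ) t,
          (1 - Real.exp (-α * φ)) * Real.exp (Real.exp (-β * δ) * z - y) * Real.exp (-β * δ) / α
            ≤ b := by
        intro δ hδ
        obtain ⟨hδ0, hδt⟩ := hδ
        set c : ℝ := α * Real.exp (β * δ) * (φ / δ) with hcdef
        have hφδ : 0 < φ / δ := div_pos hφpos hδ0
        have hc : 0 < c := by positivity
        set ζδ : ℝ → ℝ := (Set.Ico (0:ℝ) δ).indicator (fun _ => φ / δ) with hζdef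
        have hmζ : Measurable ζδ := measurable_const.indicator measurableSet_Ico
        have h0ζ : ∀ v, 0 ≤ ζδ v := fun v => Set.indicator_nonneg (fun _ _ => hφδ.le) v
        have hbζ : ∀ v, ζδ v ≤ φ / δ := by
          intro v
          simp only [hζdef, Set.indicator_apply]
          split_ifs
          · exact le_refl _
          · exact hφδ.le
        have habsζ : ∀ v, |ζδ v| ≤ φ / δ := fun v => by rw [abs_of_nonneg (h0ζ v)]; exact hbζ v
        have hIIζ : ∀ a b' : ℝ, IntervalIntegrable ζδ volume a b' := IIbdd hmζ habsζ
        have hne : ∀ᵐ v : ℝ ∂volume, v ≠ δ := by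
          have h1 : {a : ℝ | ¬ a ≠ δ} = {δ} := by ext a; simp [not_not]
          rw [ae_iff, h1]
          exact measure_singleton δ
        have hint1 : (∫ v in (0:ℝ)..δ, ζδ v) = φ := by
          have hcongr : (∫ v in (0:ℝ)..δ, ζδ v) = ∫ v in (0:ℝ)..δ, φ / δ := by
            apply intervalIntegral.integral_congr_ae
            filter_upwards [hne] with v hv hmem
            rw [Set.uIoc_of_le hδ0.le] at hmem
            have hv2 : v ∈ Set.Ico (0:ℝ) δ := ⟨hmem.1.le, lt_of_le_of_ne hmem.2 hv⟩
            simp [hζdef, Set.indicator_of_mem hv2]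
          rw [hcongr, intervalIntegral.integral_const, smul_eq_mul]
          field_simp
          ring
        have hint2 : (∫ v in δ..t, ζδ v) = 0 := by
          have heq : Set.EqOn ζδ 0 (Set.uIcc δ t) := by
            intro v hv
            rw [Set.uIcc_of_le hδt] at hv
            have hnot : v ∉ Set.Ico (0:ℝ) δ := fun hmem => absurd hv.1 (not_le.2 hmem.2)
            simp [hζdef, Set.indicator_of_notMem hnot]
          rw [intervalIntegral.integral_congr heq]
          simp
        have hintδ : (∫ v in (0:ℝ)..t, ζδ v) = φ := by
          rw [← integral_add_adjacent_intervals (hIIζ 0 δ) (hIIζ δ t), hint1, hint2, add_zero]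
        have hIδII : ∀ a b' : ℝ, IntervalIntegrable (fun v => Real.exp (β * v) * ζδ v) volume a b' :=
          fun a b' => (hIIζ a b').continuousOn_mul
            ((Real.continuous_exp.comp (continuous_const.mul continuous_id)).continuousOn)
        set Iδ : ℝ → ℝ := fun r => ∫ v in (0:ℝ)..r, Real.exp (β * v) * ζδ v with hIδdef
        have hIδc : Continuous Iδ := intervalIntegral.continuous_primitive hIδII 0
        set Eδ : ℝ → ℝ := fun r => Real.exp (-β * r) * z - Real.exp (-2 * β * r) * y
            - α * Real.exp (-β * r) * Iδ r with hEδdef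
        have hEδc : Continuous Eδ := by fun_prop
        have hEδII : ∀ a b' : ℝ, IntervalIntegrable (fun r => ζδ r * Real.exp (Eδ r)) volume a b' :=
          fun a b' => (hIIζ a b').mul_continuousOn (hEδc.rexp.continuousOn)
        have hxδb : (∫ r in (0:ℝ)..t, ζδ r * Real.exp (Eδ r)) ≤ b :=
          hb ⟨ζδ, hmζ, h0ζ, ⟨φ / δ, hbζ⟩, hintδ.le, rfl⟩
        have hzero2 : (∫ r in δ..t, ζδ r * Real.exp (Eδ r)) = 0 := by
          have heq : Set.EqOn (fun r => ζδ r * Real.exp (Eδ r)) 0 (Set.uIcc δ t) := by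
            intro v hv
            rw [Set.uIcc_of_le hδt] at hv
            have hnot : v ∉ Set.Ico (0:ℝ) δ := fun hmem => absurd hv.1 (not_le.2 hmem.2)
            simp [hζdef, Set.indicator_of_notMem hnot]
          rw [intervalIntegral.integral_congr heq]
          simp
        have hsplitx : (∫ r in (0:ℝ)..t, ζδ r * Real.exp (Eδ r))
            = ∫ r in (0:ℝ)..δ, ζδ r * Real.exp (Eδ r) := by
          rw [← integral_add_adjacent_intervals (hEδII 0 δ) (hEδII δ t), hzero2, add_zero]
        have hIδnn : ∀ r, 0 ≤ r → 0 ≤ Iδ r := fun r hr =>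
          intervalIntegral.integral_nonneg hr (fun v _ => mul_nonneg (Real.exp_pos _).le (h0ζ v))
        have hIδub : ∀ r ∈ Set.Icc (0:ℝ) δ, Iδ r ≤ Real.exp (β * δ) * (φ / δ) * r := by
          intro r hr
          have hpt : ∀ v ∈ Set.Icc (0:ℝ) r, Real.exp (β * v) * ζδ v ≤ Real.exp (β * δ) * (φ / δ) := by
            intro v hv
            have h1 : Real.exp (β * v) ≤ Real.exp (β * δ) := by
              apply Real.exp_le_exp.2
              nlinarith [hv.2, hr.2]
            exact mul_le_mul h1 (hbζ v) (h0ζ v) (Real.exp_pos _).le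
          have h := intervalIntegral.integral_mono_on hr.1 (hIδII 0 r) intervalIntegrable_const hpt
          rw [intervalIntegral.integral_const, smul_eq_mul] at h
          calc Iδ r ≤ (r - 0) * (Real.exp (β * δ) * (φ / δ)) := h
            _ = Real.exp (β * δ) * (φ / δ) * r := by ring
        set A : ℝ := Real.exp (-β * δ) * z - y with hAdef
        have hEδlb : ∀ r ∈ Set.Icc (0:ℝ) δ, A - c * r ≤ Eδ r := by
          intro r hr
          have hu1 : Real.exp (-β * r) ≤ 1 := Real.exp_le_one_iff.2 (by nlinarith [hr.1])
          have h1 : Real.exp (-β * δ) ≤ Real.exp (-β * r) := Real.exp_le_exp.2 (by nlinarith [hr.2])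
          have h2 : Real.exp (-2 * β * r) ≤ 1 := Real.exp_le_one_iff.2 (by nlinarith [hr.1])
          have h3 := hIδub r hr
          have h4 := hIδnn r hr.1
          have h5 : α * Real.exp (-β * r) * Iδ r ≤ α * Iδ r := by
            nlinarith [mul_le_mul_of_nonneg_right hu1 (mul_nonneg hα.le h4)]
          have h6 : α * Iδ r ≤ c * r := by
            rw [hcdef]
            nlinarith [mul_le_mul_of_nonneg_left h3 hα.le]
          simp only [hEδdef, hAdef]
          nlinarith [mul_le_mul_of_nonneg_right h1 hz0, mul_le_mul_of_nonneg_right h2 hy]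
        have hFTC : (∫ r in (0:ℝ)..δ, Real.exp (A - c * r)) = (Real.exp A - Real.exp (A - c * δ)) / c := by
          have hderiv : ∀ r ∈ Set.uIcc (0:ℝ) δ,
              HasDerivAt (fun s => -(Real.exp (A - c * s) / c)) (Real.exp (A - c * r)) r := by
            intro r _
            have h1 : HasDerivAt (fun s : ℝ => A - c * s) (-(c * 1)) r :=
              ((hasDerivAt_id r).const_mul c).const_sub A
            have h2 := (h1.exp.div_const c).neg
            refine h2.congr_deriv ?_
            field_simp
          rw [intervalIntegral.integral_eq_sub_of_hasDerivAt hderiv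
            ((Real.continuous_exp.comp (by fun_prop : Continuous fun s : ℝ => A - c * s)).intervalIntegrable 0 δ)]
          rw [mul_zero, sub_zero]
          field_simp
          ring
        have hlow : (φ / δ) * ((Real.exp A - Real.exp (A - c * δ)) / c)
            ≤ ∫ r in (0:ℝ)..δ, ζδ r * Real.exp (Eδ r) := by
          rw [← hFTC, ← intervalIntegral.integral_const_mul]
          apply intervalIntegral.integral_mono_ae_restrict hδ0.le
            ((continuous_const.mul (Real.continuous_exp.comp
              (by fun_prop : Continuous fun s : ℝ => A - c * s))).intervalIntegrable 0 δ)
            (hEδII 0 δ)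
          rw [Filter.EventuallyLE, ae_restrict_iff' measurableSet_Icc]
          filter_upwards [hne] with r hr hrI
          have hlt : r < δ := lt_of_le_of_ne hrI.2 hr
          have hmemI : r ∈ Set.Ico (0:ℝ) δ := ⟨hrI.1, hlt⟩
          have hζval : ζδ r = φ / δ := by rw [hζdef]; exact Set.indicator_of_mem hmemI _
          have hEb := hEδlb r ⟨hrI.1, hrI.2⟩
          calc (φ / δ) * Real.exp (A - c * r) ≤ (φ / δ) * Real.exp (Eδ r) :=
                mul_le_mul_of_nonneg_left (Real.exp_le_exp.2 hEb) hφδ.le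
            _ = ζδ r * Real.exp (Eδ r) := by rw [hζval]
        have hfinal : (1 - Real.exp (-α * φ)) * Real.exp A * Real.exp (-β * δ) / α
            ≤ (φ / δ) * ((Real.exp A - Real.exp (A - c * δ)) / c) := by
          have hcδ : c * δ = α * Real.exp (β * δ) * φ := by
            rw [hcdef]; field_simp
          have hexpβ : (1:ℝ) ≤ Real.exp (β * δ) := Real.one_le_exp (by positivity)
          have h1 : α * φ ≤ c * δ := by
            rw [hcδ]
            calc α * φ = α * 1 * φ := by ring
              _ ≤ α * Real.exp (β * δ) * φ :=
                mul_le_mul_of_nonneg_right (mul_le_mul_of_nonneg_left hexpβ hα.le) hφpos.le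
          have h2 : Real.exp (A - c * δ) ≤ Real.exp A * Real.exp (-α * φ) := by
            rw [← Real.exp_add]; apply Real.exp_le_exp.2; linarith only [h1]
          have h3 : (φ / δ) / c = Real.exp (-β * δ) / α := by
            have hee : Real.exp (-β * δ) = (Real.exp (β * δ))⁻¹ := by
              rw [← Real.exp_neg]; congr 1; ring
            rw [hcdef, hee, div_eq_div_iff (by positivity) (by positivity)]
            field_simp
          have h4 : (φ / δ) * ((Real.exp A - Real.exp (A - c * δ)) / c)
              = (Real.exp A - Real.exp (A - c * δ)) * ((φ / δ) / c) := by ring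
          rw [h4, h3]
          have h5 : (1 - Real.exp (-α * φ)) * Real.exp A ≤ Real.exp A - Real.exp (A - c * δ) := by
            have hexp : (1 - Real.exp (-α * φ)) * Real.exp A
                = Real.exp A - Real.exp A * Real.exp (-α * φ) := by ring
            rw [hexp]
            linarith only [h2]
          have h6 : (0:ℝ) ≤ Real.exp (-β * δ) / α := by positivity
          calc (1 - Real.exp (-α * φ)) * Real.exp A * Real.exp (-β * δ) / α
              = ((1 - Real.exp (-α * φ)) * Real.exp A) * (Real.exp (-β * δ) / α) := by ring
            _ ≤ (Real.exp A - Real.exp (A - c * δ)) * (Real.exp (-β * δ) / α) :=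
                mul_le_mul_of_nonneg_right h5 h6
        have hxb2 := hxδb
        rw [hsplitx] at hxb2
        linarith only [hfinal, hlow, hxb2]
      have hcont : Continuous (fun δ : ℝ =>
          (1 - Real.exp (-α * φ)) * Real.exp (Real.exp (-β * δ) * z - y) * Real.exp (-β * δ) / α) := by
        fun_prop
      have htend := (hcont.tendsto 0).mono_left
        (nhdsWithin_le_nhds (s := Set.Ioi (0:ℝ)))
      have hmem : Set.Ioc (0:ℝ) t ∈ nhdsWithin (0:ℝ) (Set.Ioi 0) :=
        Ioc_mem_nhdsGT_of_mem ⟨le_refl 0, ht0⟩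
      have hle := le_of_tendsto htend (Filter.eventually_of_mem hmem hkey)
      simpa using hle
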